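/- Let K be a nonarchimedean local field with residue field of cardinality q = p^f (p prime). Then p is the unique prime ℓ such that the quotient O_K^* / tors(O_K^*) is not ℓ-divisible, where O_K^* is the unit group of the ring of integers and tors denotes the torsion subgroup. -/

import Mathlib

open IsLocalRing Polynomial

set_option linter.unusedSectionVars false
set_option linter.unnecessarySimpa false
set_option maxHeartbeats 1000000

section StmtAux

variable {O : Type*} [CommRing O] [IsDomain O] [IsDiscreteValuationRing O]

private lemma aux_isUnit_one_add {x : O} (hx : x ∈ maximalIdeal O) : IsUnit (1 + x) := by
  by_contra h
  have h1 : (1 + x) ∈ maximalIdeal O :=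
    (IsLocalRing.mem_maximalIdeal _).mpr (mem_nonunits_iff.mpr h)
  have h2 : (1 : O) ∈ maximalIdeal O := by
    have := (maximalIdeal O).sub_mem h1 hx
    simpa using this
  exact (IsLocalRing.maximalIdeal.isMaximal O).ne_top ((Ideal.eq_top_iff_one _).mpr h2)

private lemma aux_umul {I : Ideal O} {x y : Oˣ} (hx : (x:O) - 1 ∈ I) (hy : (y:O) - 1 ∈ I) :
    ((x*y : Oˣ) : O) - 1 ∈ I := by
  have h : ((x*y : Oˣ) : O) - 1 = ((x:O)-1)*(y:O) + ((y:O)-1) := by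
    push_cast; ring
  rw [h]
  exact add_mem (I.mul_mem_right _ hx) hy

private lemma aux_uinv {I : Ideal O} {x : Oˣ} (hx : (x:O) - 1 ∈ I) :
    ((x⁻¹ : Oˣ) : O) - 1 ∈ I := by
  have h : ((x⁻¹:Oˣ):O) * (x:O) = 1 := by
    rw [← Units.val_mul, inv_mul_cancel, Units.val_one]
  have h2 : ((x⁻¹ : Oˣ) : O) - 1 = -((x⁻¹:Oˣ):O) * ((x:O)-1) := by
    linear_combination h
  rw [h2]
  exact I.mul_mem_left _ hx

private lemma aux_zero_of_mem_all [IsAdicComplete (IsLocalRing.maximalIdeal O) O]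
    {x : O} (hx : ∀ n, x ∈ (maximalIdeal O)^n) : x = 0 := by
  refine IsHausdorff.haus (inferInstance : IsHausdorff (maximalIdeal O) O) x fun n => ?_
  rw [SModEq.zero]
  simpa [smul_eq_mul, Ideal.mul_top] using hx n

private lemma aux_pow_p_raise {p : ℕ} (hpm : (p:O) ∈ maximalIdeal O)
    {i : ℕ} (hi : 1 ≤ i) {x : O} (hx : x - 1 ∈ (maximalIdeal O)^i) :
    x^p - 1 ∈ (maximalIdeal O)^(i+1) := by
  set b := x - 1 with hb
  have hxb : x = b + 1 := by rw [hb]; ring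
  have hexp : x ^ p - 1 = ∑ k ∈ Finset.range p, b^(k+1) * 1^(p-(k+1)) * (p.choose (k+1) : O) := by
    rw [hxb, add_pow, Finset.sum_range_succ']
    simp
  rw [hexp]
  refine Submodule.sum_mem _ fun k _ => ?_
  match k with
  | 0 =>
    have h0 : b ^ (0+1) * 1^(p-(0+1)) * (p.choose (0+1) : O) = b * (p : O) := by
      simp
    rw [h0, pow_succ]
    exact Ideal.mul_mem_mul hx hpm
  | (k+1) =>
    refine Ideal.mul_mem_right _ _ (Ideal.mul_mem_right _ _ ?_)
    have h1 : b^(k+2) ∈ ((maximalIdeal O)^i)^(k+2) := Ideal.pow_mem_pow hx _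
    rw [← pow_mul] at h1
    refine Ideal.pow_le_pow_right ?_ h1
    nlinarith

private lemma aux_root_of_unity {p : ℕ} (hp : p.Prime) [CharP (ResidueField O) p]
    {a : O} (ha0 : a ≠ 0) (ham : a ∈ maximalIdeal O)
    {ℓ : ℕ} (hl : ℓ.Prime) (h : (1 + a)^ℓ = 1) :
    ℓ = p ∧ ∃ c : O, IsUnit c ∧ a^(p-1) = (p:O) * c := by
  obtain ⟨m2, rfl⟩ : ∃ m2, ℓ = m2 + 2 := ⟨ℓ - 2, by have := hl.two_le; omega⟩
  have hexp : (1+a)^(m2+2) = ∑ k ∈ Finset.range (m2+3), a^k * (((m2+2).choose k : ℕ) : O) := by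
    rw [add_comm, add_pow]; simp
  rw [hexp, Finset.sum_range_succ'] at h
  simp only [pow_zero, Nat.choose_zero_right, Nat.cast_one, one_mul] at h
  have h2 : a * (∑ k ∈ Finset.range (m2+2), a^k * (((m2+2).choose (k+1) : ℕ) : O)) = 0 := by
    rw [Finset.mul_sum]
    have e : ∀ k ∈ Finset.range (m2+2),
        a * (a^k * (((m2+2).choose (k+1) : ℕ) : O)) = a^(k+1) * (((m2+2).choose (k+1) : ℕ) : O) :=
      fun k _ => by ring
    rw [Finset.sum_congr rfl e]
    linear_combination h
  have hg : (∑ k ∈ Finset.range (m2+2), a^k * (((m2+2).choose (k+1) : ℕ) : O)) = 0 :=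
    (mul_eq_zero.mp h2).resolve_left ha0
  rw [Finset.sum_range_succ'] at hg
  simp only [pow_zero, zero_add, Nat.choose_one_right, one_mul] at hg
  have hfac : ∀ S : Finset ℕ, (∑ k ∈ S, a^(k+1) * (((m2+2).choose (k+2) : ℕ) : O))
      = a * ∑ k ∈ S, a^k * (((m2+2).choose (k+2) : ℕ) : O) := by
    intro S
    rw [Finset.mul_sum]
    exact Finset.sum_congr rfl fun k _ => by ring
  rw [hfac] at hg
  set S3 := ∑ k ∈ Finset.range (m2+1), a^k * (((m2+2).choose (k+2) : ℕ) : O) with hS3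
  have hlm : ((m2+2 : ℕ) : O) ∈ maximalIdeal O := by
    have e : ((m2+2:ℕ) : O) = -(a * S3) := by linear_combination hg
    rw [e]
    exact neg_mem (Ideal.mul_mem_right _ _ ham)
  have hpeq : m2 + 2 = p := by
    have hres : ((m2+2 : ℕ) : ResidueField O) = 0 := by
      have := (residue_eq_zero_iff _).mpr hlm
      rwa [map_natCast] at this
    have hdvd : p ∣ m2 + 2 := (CharP.cast_eq_zero_iff (ResidueField O) p _).mp hres
    exact ((Nat.prime_dvd_prime_iff_eq hp hl).mp hdvd).symm
  refine ⟨hpeq, ?_⟩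
  have hS3' : S3 = (∑ k ∈ Finset.range m2, a^k * (((m2+2).choose (k+2) : ℕ) : O)) + a^m2 := by
    rw [hS3, Finset.sum_range_succ, Nat.choose_self]
    simp
  have hdvd2 : ((m2+2 : ℕ) : O) ∣ ∑ k ∈ Finset.range m2, a^k * (((m2+2).choose (k+2) : ℕ) : O) := by
    refine Finset.dvd_sum fun k hk => dvd_mul_of_dvd_right ?_ _
    have : (m2+2) ∣ (m2+2).choose (k+2) := by
      have hkp : k + 2 < m2 + 2 := by simpa using (Finset.mem_range.mp hk)
      exact (hpeq ▸ hp : (m2+2).Prime).dvd_choose_self (by omega) hkp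
    exact_mod_cast Nat.cast_dvd_cast this
  obtain ⟨c, hc⟩ := hdvd2
  refine ⟨-(1 + a * c), (aux_isUnit_one_add (Ideal.mul_mem_right _ _ ham)).neg, ?_⟩
  rw [← hpeq]
  have hfin : a^(m2+1) = ((m2+2:ℕ):O) * (-(1 + a * c)) := by
    have := hg
    rw [hS3', hc] at this
    push_cast at this ⊢
    linear_combination this
  have he : m2 + 2 - 1 = m2 + 1 := rfl
  rw [he]
  exact_mod_cast hfin

private lemma aux_torsion_eq_one {p : ℕ} (hp : p.Prime) [CharP (ResidueField O) p]
    {j : ℕ} (hj1 : 1 ≤ j)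
    (hj : ∀ a ∈ (maximalIdeal O)^j, a ≠ 0 → ∀ c : O, IsUnit c → a^(p-1) ≠ (p:O) * c)
    (t : Oˣ) (ht : IsOfFinOrder t) (htm : (t:O) - 1 ∈ (maximalIdeal O)^j) : t = 1 := by
  by_contra ht1
  set n := orderOf t with hn
  have hn0 : n ≠ 0 := (ht.orderOf_pos).ne'
  have hn1 : n ≠ 1 := fun h => ht1 (orderOf_eq_one_iff.mp h)
  set ℓ := n.minFac with hℓ
  have hlp : ℓ.Prime := Nat.minFac_prime hn1
  have hld : ℓ ∣ n := Nat.minFac_dvd n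
  set s : Oˣ := t ^ (n / ℓ) with hs
  have hsl : s ^ ℓ = 1 := by
    rw [hs, ← pow_mul, Nat.div_mul_cancel hld, hn, pow_orderOf_eq_one]
  have hs1 : s ≠ 1 := by
    intro h
    have hdvd : n ∣ n / ℓ := orderOf_dvd_of_pow_eq_one h
    have h1 : 0 < n / ℓ := Nat.div_pos (Nat.le_of_dvd (by omega) hld) (by
      have := hlp.two_le; omega)
    have h2 : n / ℓ < n := Nat.div_lt_self (by omega) hlp.one_lt
    exact absurd (Nat.le_of_dvd h1 hdvd) (by omega)
  have hsm : (s:O) - 1 ∈ (maximalIdeal O)^j := by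
    have hdvd : (t:O) - 1 ∣ (t:O)^(n/ℓ) - 1 := by
      simpa using sub_dvd_pow_sub_pow (t:O) 1 (n/ℓ)
    obtain ⟨c, hc⟩ := hdvd
    have he : (s:O) - 1 = ((t:O) - 1) * c := by
      rw [hs, Units.val_pow_eq_pow_val, hc]
    rw [he]
    exact Ideal.mul_mem_right _ _ htm
  set a : O := (s:O) - 1 with ha
  have ha0 : a ≠ 0 := by
    intro h
    apply hs1
    ext
    rw [Units.val_one]
    exact sub_eq_zero.mp h
  have hone : (1 + a)^ℓ = 1 := by
    have he : (1 : O) + a = (s : O) := by rw [ha]; ring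
    rw [he, ← Units.val_pow_eq_pow_val, hsl, Units.val_one]
  have ham : a ∈ maximalIdeal O := (Ideal.pow_le_self (by omega)) hsm
  obtain ⟨-, c, hcu, hceq⟩ := aux_root_of_unity hp ha0 ham hlp hone
  exact hj a hsm ha0 c hcu hceq

private lemma aux_exists_j [IsAdicComplete (IsLocalRing.maximalIdeal O) O]
    {p : ℕ} (hp : 2 ≤ p) :
    ∃ j : ℕ, 1 ≤ j ∧ ∀ a ∈ (maximalIdeal O)^j, a ≠ 0 →
      ∀ c : O, IsUnit c → a^(p-1) ≠ (p:O) * c := by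
  by_cases hp0 : (p : O) = 0
  · refine ⟨1, le_refl _, fun a _ ha0 c _ hcon => ?_⟩
    rw [hp0, zero_mul] at hcon
    exact ha0 ((pow_eq_zero_iff (n := p - 1) (by omega)).mp hcon)
  · have hex : ∃ j, (p : O) ∉ (maximalIdeal O)^j := by
      by_contra hc
      push_neg at hc
      exact hp0 (aux_zero_of_mem_all hc)
    obtain ⟨j, hj⟩ := hex
    have hj1 : 1 ≤ j := by
      rcases Nat.eq_zero_or_pos j with h | h
      · exfalso; apply hj; rw [h]; simp
      · exact h
    refine ⟨j, hj1, fun a ha ha0 c hc hcon => ?_⟩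
    apply hj
    obtain ⟨cu, hcu⟩ := hc
    have he : (p : O) = a^(p-1) * (cu⁻¹ : Oˣ) := by
      rw [hcon, ← hcu]
      rw [mul_assoc, ← Units.val_mul, mul_inv_cancel, Units.val_one, mul_one]
    rw [he]
    refine Ideal.mul_mem_right _ _ ?_
    have h1 : a^(p-1) ∈ ((maximalIdeal O)^j)^(p-1) := Ideal.pow_mem_pow ha _
    rw [← pow_mul] at h1
    exact Ideal.pow_le_pow_right (Nat.le_mul_of_pos_right _ (by omega)) h1

private lemma aux_charP [Finite (ResidueField O)] {p f : ℕ} (hp : p.Prime) (hf : 1 ≤ f)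
    (hq : Nat.card (ResidueField O) = p ^ f) : CharP (ResidueField O) p := by
  classical
  haveI : Fintype (ResidueField O) := Fintype.ofFinite _
  set c := ringChar (ResidueField O) with hc
  haveI hcinst : CharP (ResidueField O) c := ringChar.charP _
  obtain ⟨n, hcp, hcard⟩ := FiniteField.card (ResidueField O) c
  have he : c ^ (n:ℕ) = p ^ f := by
    rw [← hcard, ← hq, Nat.card_eq_fintype_card]
  have hdvd : p ∣ c := by
    have hd : p ∣ c ^ (n:ℕ) := by
      rw [he]
      exact dvd_pow_self p (by omega)
    exact hp.dvd_of_dvd_pow hd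
  have : c = p := ((Nat.prime_dvd_prime_iff_eq hp hcp).mp hdvd).symm
  rwa [this] at hcinst

private lemma aux_hensel_root [IsAdicComplete (IsLocalRing.maximalIdeal O) O]
    {n : ℕ} (hn : n ≠ 0) (w : O) (a₀ : O)
    (h1 : a₀ ^ n - w ∈ maximalIdeal O)
    (h2 : IsUnit (residue O ((n : O) * a₀ ^ (n-1)))) :
    ∃ a : O, a ^ n = w ∧ a - a₀ ∈ maximalIdeal O := by
  have H := (IsAdicComplete.henselianRing O (maximalIdeal O)).is_henselian
  set F : O[X] := X ^ n - C w with hF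
  have hmon : F.Monic := monic_X_pow_sub_C w hn
  have heval : F.eval a₀ ∈ maximalIdeal O := by simpa [hF] using h1
  have hder : IsUnit ((Ideal.Quotient.mk (maximalIdeal O)) (F.derivative.eval a₀)) := by
    have hd : F.derivative = (n : O[X]) * X ^ (n-1) := by
      rw [hF, derivative_sub, derivative_X_pow, derivative_C, sub_zero]
      simp
    have e : F.derivative.eval a₀ = (n : O) * a₀ ^ (n-1) := by rw [hd]; simp
    rw [e]
    exact h2
  obtain ⟨a, ha, hd⟩ := H F hmon a₀ heval hder
  refine ⟨a, ?_, hd⟩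
  have hr := ha
  simp only [hF, IsRoot, eval_sub, eval_pow, eval_X, eval_C, sub_eq_zero] at hr
  exact hr

private lemma aux_teich [IsAdicComplete (IsLocalRing.maximalIdeal O) O]
    [Finite (ResidueField O)] (u : Oˣ) :
    ∃ s : Oˣ, s ^ (Nat.card (ResidueField O) - 1) = 1 ∧
      ((u * s⁻¹ : Oˣ) : O) - 1 ∈ maximalIdeal O := by
  classical
  haveI : Fintype (ResidueField O) := Fintype.ofFinite _
  set q := Nat.card (ResidueField O) with hq
  have hq2 : 2 ≤ q := by
    rw [hq, Nat.card_eq_fintype_card]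
    exact Fintype.one_lt_card
  have hu0 : residue O (u:O) ≠ 0 :=
    (residue_ne_zero_iff_isUnit _).mpr u.isUnit
  have hpow1 : (residue O (u:O))^(q-1) = 1 := by
    rw [hq, Nat.card_eq_fintype_card]
    exact FiniteField.pow_card_sub_one_eq_one _ hu0
  have h1 : (u:O) ^ (q-1) - 1 ∈ maximalIdeal O := by
    rw [← residue_eq_zero_iff, map_sub, map_pow, map_one, hpow1, sub_self]
  have h2 : IsUnit (residue O (((q-1 : ℕ) : O) * (u:O) ^ (q-1-1))) := by
    have hcard0 : ((q : ℕ) : ResidueField O) = 0 := by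
      rw [hq, Nat.card_eq_fintype_card]
      exact FiniteField.cast_card_eq_zero _
    have he : residue O (((q-1 : ℕ) : O) * (u:O) ^ (q-1-1))
        = ((q-1 : ℕ) : ResidueField O) * (residue O (u:O))^(q-1-1) := by
      rw [map_mul, map_pow, map_natCast]
    rw [he]
    refine IsUnit.mul ?_ (IsUnit.pow _ ?_)
    · have hm1 : ((q-1 : ℕ) : ResidueField O) = -1 := by
        rw [Nat.cast_sub (by omega), hcard0]
        simp
      rw [hm1]
      exact isUnit_one.neg
    · exact isUnit_iff_ne_zero.mpr hu0
  obtain ⟨a, ha, hd⟩ :=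
    aux_hensel_root (O := O) (n := q-1) (by omega) 1 (u:O) (by simpa using h1) h2
  have haU : IsUnit a := by
    have hmul : a * a^(q-2) = 1 := by
      have he : a^(q-1) = a * a^(q-2) := by
        rw [← pow_succ']
        congr 1
        omega
      rw [← he, ha]
    exact IsUnit.of_mul_eq_one _ hmul
  refine ⟨haU.unit, ?_, ?_⟩
  · ext
    push_cast
    rw [IsUnit.unit_spec, ha]
  · have hs : (haU.unit : O) = a := IsUnit.unit_spec haU
    have he : ((u * haU.unit⁻¹ : Oˣ) : O) - 1 = ((u:O) - a) * ((haU.unit⁻¹ : Oˣ) : O) := by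
      push_cast
      have hinv : ((haU.unit⁻¹ : Oˣ) : O) * (haU.unit : O) = 1 := by
        rw [← Units.val_mul, inv_mul_cancel, Units.val_one]
      rw [hs] at hinv
      linear_combination hinv
    rw [he]
    refine Ideal.mul_mem_right _ _ ?_
    have hneg : (u:O) - a = -(a - (u:O)) := by ring
    rw [hneg]
    exact neg_mem hd

end StmtAux

/-- Let `O` be the valuation ring of a nonarchimedean local field
(a complete discrete valuation ring with finite residue field) whose residue field has
cardinality `q = p ^ f`.  Then `p` is the unique prime `ℓ` such that the quotient
`Oˣ / tors(Oˣ)` is not `ℓ`-divisible. -/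
theorem stmt5 (O : Type*) [CommRing O] [IsDomain O] [IsDiscreteValuationRing O]
    [IsAdicComplete (IsLocalRing.maximalIdeal O) O]
    [Finite (IsLocalRing.ResidueField O)]
    (p f : ℕ) (hp : p.Prime) (hf : 1 ≤ f)
    (hq : Nat.card (IsLocalRing.ResidueField O) = p ^ f) :
    ∀ ℓ : ℕ, ℓ.Prime →
      ((¬ ∀ x : Oˣ ⧸ CommGroup.torsion Oˣ, ∃ y, y ^ ℓ = x) ↔ ℓ = p) := by
  haveI hP : CharP (ResidueField O) p := aux_charP hp hf hq
  have hq2 : 2 ≤ Nat.card (ResidueField O) := by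
    rw [hq]
    calc 2 ≤ p := hp.two_le
    _ ≤ p ^ f := Nat.le_self_pow (by omega) p
  have hpm : (p : O) ∈ maximalIdeal O := by
    rw [← residue_eq_zero_iff, map_natCast]
    exact CharP.cast_eq_zero _ p
  intro ℓ hℓ
  constructor
  · -- not divisible → ℓ = p ; contrapositive: ℓ ≠ p → divisible
    intro hnot
    by_contra hne
    apply hnot
    intro x
    obtain ⟨u, rfl⟩ := QuotientGroup.mk_surjective x
    obtain ⟨s, hs, hw⟩ := aux_teich u
    have hsT : s ∈ CommGroup.torsion Oˣ :=
      (CommGroup.mem_torsion _).mpr (isOfFinOrder_iff_pow_eq_one.mpr ⟨_, by omega, hs⟩)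
    -- Hensel ℓ-th root of u * s⁻¹
    have h1 : (1:O) ^ ℓ - ((u * s⁻¹ : Oˣ) : O) ∈ maximalIdeal O := by
      rw [one_pow]
      have he : (1:O) - ((u * s⁻¹ : Oˣ) : O) = -(((u * s⁻¹ : Oˣ) : O) - 1) := by ring
      rw [he]
      exact neg_mem hw
    have h2 : IsUnit (residue O ((ℓ : O) * (1:O) ^ (ℓ-1))) := by
      rw [one_pow, mul_one, map_natCast]
      have hne0 : ((ℓ : ℕ) : ResidueField O) ≠ 0 := by
        rw [Ne, CharP.cast_eq_zero_iff (ResidueField O) p ℓ]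
        intro hd
        exact hne (((Nat.prime_dvd_prime_iff_eq hp hℓ).mp hd).symm)
      exact isUnit_iff_ne_zero.mpr hne0
    obtain ⟨a, ha, -⟩ :=
      aux_hensel_root (O := O) (n := ℓ) (by have := hℓ.two_le; omega) _ 1 h1 h2
    have haU : IsUnit a := by
      have : IsUnit (a ^ ℓ) := by
        rw [ha]
        exact (u * s⁻¹).isUnit
      exact (isUnit_pow_iff (by have := hℓ.two_le; omega)).mp this
    refine ⟨QuotientGroup.mk haU.unit, ?_⟩
    have hbl : haU.unit ^ ℓ = u * s⁻¹ := by
      ext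
      push_cast
      rw [IsUnit.unit_spec, ha]
      simp
    rw [← QuotientGroup.mk_pow, hbl]
    rw [QuotientGroup.eq]
    have he : (u * s⁻¹)⁻¹ * u = s := by group
    rw [he]
    exact hsT
  · -- ℓ = p → not divisible
    intro heq
    rw [heq]
    intro hdiv
    obtain ⟨j, hj1, hj⟩ := aux_exists_j (O := O) hp.two_le
    obtain ⟨π, hπ⟩ := IsDiscreteValuationRing.exists_irreducible O
    have hπm : π ∈ maximalIdeal O :=
      (IsLocalRing.mem_maximalIdeal _).mpr (mem_nonunits_iff.mpr hπ.not_isUnit)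
    have hπ0 : π ≠ 0 := hπ.ne_zero
    have hπj : π ^ j ∈ (maximalIdeal O)^j := Ideal.pow_mem_pow hπm j
    have hπj0 : π ^ j ≠ 0 := pow_ne_zero _ hπ0
    have huu : IsUnit (1 + π^j) := aux_isUnit_one_add ((Ideal.pow_le_self (by omega)) hπj)
    set u : Oˣ := huu.unit with hudef
    have huc : (u : O) = 1 + π^j := huu.unit_spec
    -- iterated divisibility
    have hiter : ∀ k : ℕ, ∃ y : Oˣ ⧸ CommGroup.torsion Oˣ, y ^ (p^k) = QuotientGroup.mk u := by
      intro k
      induction k with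
      | zero => exact ⟨QuotientGroup.mk u, by simp⟩
      | succ k ih =>
        obtain ⟨y, hy⟩ := ih
        obtain ⟨z, hz⟩ := hdiv y
        exact ⟨z, by rw [pow_succ', pow_mul, hz, hy]⟩
    -- decomposition u = t_k * w_k^{p^k}
    have habc : ∀ (A B C : Oˣ), (A⁻¹ * C * B) * (A * B⁻¹) = C := by
      intro A B C
      have h : A⁻¹ * C * B * (A * B⁻¹) = C * (A⁻¹ * A) * (B * B⁻¹) := by
        simp only [mul_comm, mul_left_comm, mul_assoc]
      rw [h, inv_mul_cancel, mul_inv_cancel, mul_one, mul_one]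
    have hdecomp : ∀ k : ℕ, ∃ t : Oˣ, t ∈ CommGroup.torsion Oˣ ∧ ∃ w : Oˣ,
        ((w:O) - 1 ∈ maximalIdeal O) ∧ u = t * w ^ (p^k) := by
      intro k
      obtain ⟨y, hy⟩ := hiter k
      obtain ⟨v, rfl⟩ := QuotientGroup.mk_surjective y
      rw [← QuotientGroup.mk_pow] at hy
      have hτ : (v ^ (p^k))⁻¹ * u ∈ CommGroup.torsion Oˣ := QuotientGroup.eq.mp hy
      obtain ⟨s, hs, hw⟩ := aux_teich v
      have hsT : s ∈ CommGroup.torsion Oˣ :=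
        (CommGroup.mem_torsion _).mpr (isOfFinOrder_iff_pow_eq_one.mpr ⟨_, by omega, hs⟩)
      refine ⟨((v ^ (p^k))⁻¹ * u) * (s ^ (p^k)),
        mul_mem hτ (Subgroup.pow_mem _ hsT _), v * s⁻¹, hw, ?_⟩
      rw [mul_pow, inv_pow]
      exact (habc _ _ _).symm
    choose t hT w hw hu' using hdecomp
    -- levels of ℓ^k-th powers
    have hgen : ∀ (x : Oˣ), ((x:O) - 1 ∈ maximalIdeal O) →
        ∀ k, ((x ^ (p^k) : Oˣ) : O) - 1 ∈ (maximalIdeal O)^(1+k) := by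
      intro x hx k
      induction k with
      | zero => simpa using hx
      | succ k ih =>
        have he : x ^ (p^(k+1)) = (x ^ (p^k)) ^ p := by
          rw [← pow_mul, pow_succ]
        rw [he, Units.val_pow_eq_pow_val]
        have hr := aux_pow_p_raise hpm (i := 1+k) (by omega)
          (x := ((x ^ (p^k) : Oˣ) : O)) ih
        convert hr using 2
        omega
    -- stabilization of t
    have hstab : ∀ k, j ≤ k + 1 → t (k+1) = t k := by
      intro k hk
      have heq2 : t k * (w k)^(p^k) = t (k+1) * (w (k+1))^(p^(k+1)) := by
        rw [← hu' k, ← hu' (k+1)]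
      have σdef : (t (k+1))⁻¹ * t k
          = (w (k+1))^(p^(k+1)) * ((w k)^(p^k))⁻¹ := by
        rw [inv_mul_eq_iff_eq_mul, ← mul_assoc, ← heq2, mul_inv_cancel_right]
      have hσT : (t (k+1))⁻¹ * t k ∈ CommGroup.torsion Oˣ :=
        mul_mem (inv_mem (hT _)) (hT _)
      have hσm : (((t (k+1))⁻¹ * t k : Oˣ) : O) - 1 ∈ (maximalIdeal O)^j := by
        rw [σdef]
        have hA : ((w k ^ (p^k) : Oˣ) : O) - 1 ∈ (maximalIdeal O)^j :=
          Ideal.pow_le_pow_right (by omega) (hgen (w k) (hw k) k)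
        have hB : ((w (k+1) ^ (p^(k+1)) : Oˣ) : O) - 1 ∈ (maximalIdeal O)^j :=
          Ideal.pow_le_pow_right (by omega) (hgen (w (k+1)) (hw (k+1)) (k+1))
        exact aux_umul hB (aux_uinv hA)
      have hσ1 : (t (k+1))⁻¹ * t k = 1 :=
        aux_torsion_eq_one hp hj1 hj _ ((CommGroup.mem_torsion _).mp hσT) hσm
      exact inv_mul_eq_one.mp hσ1
    have hconst : ∀ k, j ≤ k → t k = t j := by
      intro k hk
      induction k with
      | zero => exact absurd hk (by omega)
      | succ k ih =>
        rcases Nat.lt_or_ge j (k+1) with h | h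
        · rw [hstab k (by omega)]
          exact ih (by omega)
        · have : j = k + 1 := by omega
          rw [this]
    have hall : ∀ n, ((u * (t j)⁻¹ : Oˣ) : O) - 1 ∈ (maximalIdeal O)^n := by
      intro n
      set k := max n j with hk
      have hk1 : j ≤ k := le_max_right _ _
      have hk2 : n ≤ 1 + k := by omega
      have htk : t k = t j := hconst k hk1
      have he : u * (t j)⁻¹ = (w k)^(p^k) := by
        rw [← htk, hu' k, mul_comm (t k) _, mul_inv_cancel_right]
      rw [he]
      exact Ideal.pow_le_pow_right hk2 (hgen (w k) (hw k) k)
    have hzero : ((u * (t j)⁻¹ : Oˣ) : O) - 1 = 0 := aux_zero_of_mem_all hall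
    have hueq : u = t j := by
      have h1 : ((u * (t j)⁻¹ : Oˣ) : O) = ((1 : Oˣ) : O) := by
        rw [Units.val_one]
        linear_combination hzero
      exact mul_inv_eq_one.mp (Units.ext h1)
    have huT : IsOfFinOrder u := by
      rw [hueq]
      exact (CommGroup.mem_torsion _).mp (hT j)
    have hum : (u:O) - 1 ∈ (maximalIdeal O)^j := by
      rw [huc]
      simpa using hπj
    have hu1 : u = 1 := aux_torsion_eq_one hp hj1 hj u huT hum
    apply hπj0
    have hfin : (1:O) + π^j = 1 := by
      rw [← huc, hu1, Units.val_one]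
    linear_combination hfin
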